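/- Let H be a complex Hilbert space and let H = H₁ ⊕ ⋯ ⊕ Hₙ be a direct sum decomposition into closed subspaces (every ξ ∈ H has a unique representation ξ = ξ₁ + ⋯ + ξₙ with ξᵢ ∈ Hᵢ). Then the following are equivalent: (i) Hᵢ ⟂ Hⱼ for all i ≠ j (⟨ξ,η⟩ = 0 for ξ ∈ Hᵢ, η ∈ Hⱼ); (ii) the decomposition is small with respect to the Hilbert multi-norm, i.e. ‖Q₁ξ₁ + ⋯ + Qₙξₙ‖ ≤ ‖(ξ₁,…,ξₙ)‖^H_n for all ξ₁,…,ξₙ ∈ H, where Qᵢ are the natural projections onto Hᵢ; (iii) the decomposition is orthogonal with respect to the Hilbert multi-norm, i.e. for all ξᵢ ∈ Hᵢ and every partition {S₁,…,S_m} of {1,…,n}, ‖(Σ_{i∈S₁}ξᵢ, …, Σ_{i∈S_m}ξᵢ)‖^H_m = ‖(ξ₁,…,ξₙ)‖^H_n; (iv) the decomposition is hermitian, i.e. ‖α₁ξ₁ + ⋯ + αₙξₙ‖ = ‖ξ₁ + ⋯ + ξₙ‖ for all ξᵢ ∈ Hᵢ and αᵢ ∈ ℂ with |αᵢ| = 1.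 -/

import Mathlib

variable {H : Type*} [NormedAddCommGroup H] [InnerProductSpace ℂ H] [CompleteSpace H]

/-- An orthogonal projection on a Hilbert space: a bounded idempotent self-adjoint operator. -/
def IsOrthProjection (P : H →L[ℂ] H) : Prop :=
  (∀ v : H, P (P v) = P v) ∧ (∀ v w : H, (inner ℂ (P v) w : ℂ) = inner ℂ v (P w))

/-- The Hilbert multi-norm `‖ξ‖^H_n`: the supremum of `‖P₁ξ₁ + ⋯ + Pₙξₙ‖` over all families
of mutually orthogonal orthogonal projections summing to the identity. -/
noncomputable def hilbertMultiNorm (n : ℕ) (ξ : Fin n → H) : ℝ :=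
  sSup {r : ℝ | ∃ P : Fin n → H →L[ℂ] H, (∀ i, IsOrthProjection (P i)) ∧
    (∀ i j, i ≠ j → ∀ v, P i (P j v) = 0) ∧ (∀ v, ∑ i, P i v = v) ∧
    r = ‖∑ i, P i (ξ i)‖}

set_option linter.unusedSectionVars false
set_option maxHeartbeats 1000000

private lemma key_c (t : ℂ) (h : ∀ c : ℂ, ‖c‖ = 1 → (c * t).re ≤ 0) : t = 0 := by
  by_contra ht
  have hn : 0 < ‖t‖ := norm_pos_iff.mpr ht
  have hc : ‖(starRingEnd ℂ) t / (‖t‖ : ℂ)‖ = 1 := by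
    rw [norm_div, RCLike.norm_conj, Complex.norm_real, Real.norm_eq_abs, abs_norm,
      div_self hn.ne']
  have h2 := h _ hc
  have h3 : (starRingEnd ℂ) t / (‖t‖ : ℂ) * t = ((‖t‖ : ℝ) : ℂ) := by
    rw [div_mul_eq_mul_div, RCLike.conj_mul]
    have habs : ((‖t‖ : ℝ) : ℂ) ≠ 0 :=
      Complex.ofReal_ne_zero.mpr hn.ne'
    rw [sq]
    field_simp
    rfl
  rw [h3] at h2
  simp at h2
  exact ht h2

private lemma inner_eq_zero_of_le (x y : H)
    (h : ∀ c : ℂ, ‖c‖ = 1 → ‖x + c • y‖ ^ 2 ≤ ‖x‖ ^ 2 + ‖y‖ ^ 2) :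
    (inner ℂ x y : ℂ) = 0 := by
  apply key_c
  intro c hc
  have h1 := h c hc
  have h2 : ‖x + c • y‖ ^ 2 = ‖x‖ ^ 2 + 2 * Complex.re (inner ℂ x (c • y) : ℂ) + ‖c • y‖ ^ 2 :=
    norm_add_sq (𝕜 := ℂ) x (c • y)
  rw [inner_smul_right] at h2
  have h3 : ‖c • y‖ = ‖y‖ := by rw [norm_smul, hc, one_mul]
  rw [h3] at h2
  have h4 : (c * inner ℂ x y).re = Complex.re ((c : ℂ) * (inner ℂ x y : ℂ)) := rfl
  linarith

private lemma norm_sum_sq {n : ℕ} (f : Fin n → H)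
    (h : ∀ i j, i ≠ j → (inner ℂ (f i) (f j) : ℂ) = 0) :
    ‖∑ i, f i‖ ^ 2 = ∑ i, ‖f i‖ ^ 2 := by
  have key : (inner ℂ (∑ i, f i) (∑ i, f i) : ℂ) = ∑ i, inner ℂ (f i) (f i) := by
    rw [sum_inner]
    refine Finset.sum_congr rfl fun i _ => ?_
    rw [inner_sum]
    rw [Finset.sum_eq_single i (fun j _ hji => h i j (Ne.symm hji)) (by simp)]
  calc ‖∑ i, f i‖ ^ 2 = Complex.re (inner ℂ (∑ i, f i) (∑ i, f i) : ℂ) :=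
        (inner_self_eq_norm_sq (𝕜 := ℂ) _).symm
    _ = ∑ i, Complex.re (inner ℂ (f i) (f i) : ℂ) := by rw [key, Complex.re_sum]
    _ = ∑ i, ‖f i‖ ^ 2 := Finset.sum_congr rfl fun i _ => inner_self_eq_norm_sq (𝕜 := ℂ) _

private lemma proj_norm_le (P : H →L[ℂ] H) (hP : IsOrthProjection P) (v : H) :
    ‖P v‖ ≤ ‖v‖ := by
  rcases eq_or_lt_of_le (norm_nonneg (P v)) with h0 | h0
  · rw [← h0]; exact norm_nonneg v
  have e : (inner ℂ (P v) (P v) : ℂ) = inner ℂ v (P v) := by rw [hP.2, hP.1]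
  have h1 : ‖P v‖ ^ 2 = RCLike.re (inner ℂ v (P v) : ℂ) := by
    rw [← inner_self_eq_norm_sq (𝕜 := ℂ), e]
  have h2 : RCLike.re (inner ℂ v (P v) : ℂ) ≤ ‖v‖ * ‖P v‖ := re_inner_le_norm _ _
  nlinarith [h1, h2]

private lemma family_norm_sq {n : ℕ} (P : Fin n → H →L[ℂ] H)
    (hP : ∀ i, IsOrthProjection (P i))
    (horth : ∀ i j, i ≠ j → ∀ v, P i (P j v) = 0) (ζ : Fin n → H) :
    ‖∑ i, P i (ζ i)‖ ^ 2 = ∑ i, ‖P i (ζ i)‖ ^ 2 := by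
  refine norm_sum_sq _ fun i j hij => ?_
  rw [(hP i).2, horth i j hij, inner_zero_right]

private lemma hMN_mem_le {n : ℕ} (ξ : Fin n → H) {r : ℝ}
    (hr : r ∈ {r : ℝ | ∃ P : Fin n → H →L[ℂ] H, (∀ i, IsOrthProjection (P i)) ∧
      (∀ i j, i ≠ j → ∀ v, P i (P j v) = 0) ∧ (∀ v, ∑ i, P i v = v) ∧
      r = ‖∑ i, P i (ξ i)‖}) :
    r ≤ Real.sqrt (∑ i, ‖ξ i‖ ^ 2) := by
  obtain ⟨P, hP, horth, -, hr⟩ := hr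
  rw [hr]
  rw [show ‖∑ i, P i (ξ i)‖ = Real.sqrt (‖∑ i, P i (ξ i)‖ ^ 2) by
    rw [Real.sqrt_sq (norm_nonneg _)]]
  apply Real.sqrt_le_sqrt
  rw [family_norm_sq P hP horth]
  exact Finset.sum_le_sum fun i _ =>
    pow_le_pow_left₀ (norm_nonneg _) (proj_norm_le _ (hP i) _) 2

private lemma hMN_bddAbove {n : ℕ} (ξ : Fin n → H) :
    BddAbove {r : ℝ | ∃ P : Fin n → H →L[ℂ] H, (∀ i, IsOrthProjection (P i)) ∧
      (∀ i j, i ≠ j → ∀ v, P i (P j v) = 0) ∧ (∀ v, ∑ i, P i v = v) ∧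
      r = ‖∑ i, P i (ξ i)‖} :=
  ⟨Real.sqrt (∑ i, ‖ξ i‖ ^ 2), fun _ hr => hMN_mem_le ξ hr⟩

private lemma hMN_le_sqrt {n : ℕ} (ξ : Fin n → H) :
    hilbertMultiNorm n ξ ≤ Real.sqrt (∑ i, ‖ξ i‖ ^ 2) :=
  Real.sSup_le (fun _ hr => hMN_mem_le ξ hr) (Real.sqrt_nonneg _)

private lemma hMN_congr {n : ℕ} (ξ ξ' : Fin n → H)
    (h : ∀ i, ∃ c : ℂ, ‖c‖ = 1 ∧ ξ' i = c • ξ i) :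
    hilbertMultiNorm n ξ' = hilbertMultiNorm n ξ := by
  unfold hilbertMultiNorm
  congr 1
  ext r
  have key : ∀ (P : Fin n → H →L[ℂ] H), (∀ i, IsOrthProjection (P i)) →
      (∀ i j, i ≠ j → ∀ v, P i (P j v) = 0) →
      ‖∑ i, P i (ξ' i)‖ = ‖∑ i, P i (ξ i)‖ := by
    intro P hP horth
    have h1 : ‖∑ i, P i (ξ' i)‖ ^ 2 = ‖∑ i, P i (ξ i)‖ ^ 2 := by
      rw [family_norm_sq P hP horth, family_norm_sq P hP horth]
      refine Finset.sum_congr rfl fun i _ => ?_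
      obtain ⟨c, hc, hci⟩ := h i
      rw [hci, map_smul, norm_smul, hc, one_mul]
    rw [← Real.sqrt_sq (norm_nonneg (∑ i, P i (ξ' i))),
      ← Real.sqrt_sq (norm_nonneg (∑ i, P i (ξ i))), h1]
  simp only [Set.mem_setOf_eq]
  constructor
  · rintro ⟨P, hP, horth, hsum, rfl⟩
    exact ⟨P, hP, horth, hsum, key P hP horth⟩
  · rintro ⟨P, hP, horth, hsum, rfl⟩
    exact ⟨P, hP, horth, hsum, (key P hP horth).symm⟩

private lemma hMN_one (v : H) : hilbertMultiNorm 1 (fun _ => v) = ‖v‖ := by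
  unfold hilbertMultiNorm
  have : {r : ℝ | ∃ P : Fin 1 → H →L[ℂ] H, (∀ i, IsOrthProjection (P i)) ∧
      (∀ i j, i ≠ j → ∀ w, P i (P j w) = 0) ∧ (∀ w, ∑ i, P i w = w) ∧
      r = ‖∑ i, P i v‖} = {‖v‖} := by
    ext r
    simp only [Set.mem_setOf_eq, Set.mem_singleton_iff]
    constructor
    · rintro ⟨P, hP, horth, hsum, rfl⟩
      congr 1
      simp only [Fin.sum_univ_one] at hsum ⊢
      exact hsum v
    · rintro rfl
      refine ⟨fun _ => ContinuousLinearMap.id ℂ H, fun i => ⟨fun _ => rfl, fun _ _ => rfl⟩,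
        fun i j hij => absurd (Subsingleton.elim i j) hij, fun w => by simp, by simp⟩
  rw [this, csSup_singleton]

private lemma hMN_eq_of_orth {n : ℕ} (ξ : Fin n → H)
    (h : ∀ i j, i ≠ j → (inner ℂ (ξ i) (ξ j) : ℂ) = 0) :
    hilbertMultiNorm n ξ = ‖∑ i, ξ i‖ := by
  have hnorm : Real.sqrt (∑ i, ‖ξ i‖ ^ 2) = ‖∑ i, ξ i‖ := by
    rw [← norm_sum_sq ξ h, Real.sqrt_sq (norm_nonneg _)]
  rcases Nat.eq_zero_or_pos n with hn | hn
  · subst hn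
    have h1 : hilbertMultiNorm 0 ξ ≤ 0 := by
      refine Real.sSup_le ?_ le_rfl
      rintro r ⟨P, -, -, -, rfl⟩
      simp
    have h0 : 0 ≤ hilbertMultiNorm 0 ξ :=
      Real.sSup_nonneg (by rintro r ⟨P, -, -, -, rfl⟩; positivity)
    rw [le_antisymm h1 h0]
    simp
  set i0 : Fin n := ⟨0, hn⟩ with hi0
  set T : Fin n → H →L[ℂ] H :=
    fun i => (ℂ ∙ ξ i).subtypeL.comp (Submodule.orthogonalProjectionOnto (ℂ ∙ ξ i)) with hT
  have hT_apply : ∀ i v, T i v = (Submodule.orthogonalProjectionOnto (ℂ ∙ ξ i) v : H) := fun i v => rfl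
  have hT_self : ∀ i (v w : H), (inner ℂ (T i v) w : ℂ) = inner ℂ v (T i w) := fun i v w =>
    Submodule.inner_starProjection_left_eq_right _ v w
  have hT_ker : ∀ i (w : H), w ∈ (ℂ ∙ ξ i)ᗮ → T i w = 0 := by
    intro i w hw
    rw [hT_apply, Submodule.orthogonalProjectionOnto_apply_of_mem_orthogonal hw]
    rfl
  have hT_idem : ∀ i v, T i (T i v) = T i v := by
    intro i v
    rw [hT_apply, hT_apply, Submodule.orthogonalProjectionOnto_mem_subspace_eq_self]
  have hmem_orth : ∀ i j, i ≠ j → ξ j ∈ (ℂ ∙ ξ i)ᗮ := by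
    intro i j hij
    rw [Submodule.mem_orthogonal]
    intro u hu
    obtain ⟨a, rfl⟩ := Submodule.mem_span_singleton.mp hu
    rw [inner_smul_left, h i j hij, mul_zero]
  have hT_orth : ∀ i j, i ≠ j → ∀ v, T i (T j v) = 0 := by
    intro i j hij v
    apply hT_ker
    rw [hT_apply]
    obtain ⟨a, ha⟩ :=
      Submodule.mem_span_singleton.mp (Submodule.coe_mem (Submodule.orthogonalProjectionOnto (ℂ ∙ ξ j) v))
    rw [← ha]
    exact Submodule.smul_mem _ a (hmem_orth i j hij)
  have hT_self_apply : ∀ i, T i (ξ i) = ξ i := by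
    intro i
    exact Submodule.starProjection_eq_self_iff.mpr (Submodule.mem_span_singleton_self _)
  have hT_orth_apply : ∀ i j, i ≠ j → T i (ξ j) = 0 := fun i j hij =>
    hT_ker i _ (hmem_orth i j hij)
  set S : H →L[ℂ] H := ∑ i ∈ Finset.univ.erase i0, T i with hS
  have hS_apply : ∀ v, S v = ∑ i ∈ Finset.univ.erase i0, T i v := by
    intro v; rw [hS]; simp [ContinuousLinearMap.sum_apply]
  have hS_T : ∀ j ∈ Finset.univ.erase i0, ∀ v, S (T j v) = T j v := by
    intro j hj v
    rw [hS_apply]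
    rw [Finset.sum_eq_single_of_mem j hj (fun i _ hij => hT_orth i j hij _)]
    exact hT_idem j v
  have hS_idem : ∀ v, S (S v) = S v := by
    intro v
    rw [hS_apply v, map_sum]
    exact Finset.sum_congr rfl fun j hj => hS_T j hj v
  have hS_selfadj : ∀ v w, (inner ℂ (S v) w : ℂ) = inner ℂ v (S w) := by
    intro v w
    rw [hS_apply, hS_apply, sum_inner, inner_sum]
    exact Finset.sum_congr rfl fun i _ => hT_self i v w
  set P : Fin n → H →L[ℂ] H :=
    fun i => if i = i0 then ContinuousLinearMap.id ℂ H - S else T i with hP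
  have hP_proj : ∀ i, IsOrthProjection (P i) := by
    intro i
    rw [hP]
    by_cases hi : i = i0 <;> simp only [hi, if_pos, if_neg, ite_true, ite_false]
    · constructor
      · intro v
        simp only [ContinuousLinearMap.sub_apply, ContinuousLinearMap.id_apply, map_sub,
          hS_idem]
        abel
      · intro v w
        simp only [ContinuousLinearMap.sub_apply, ContinuousLinearMap.id_apply,
          inner_sub_left, inner_sub_right, hS_selfadj]
    · exact ⟨hT_idem i, hT_self i⟩
  have hP_orth : ∀ i j, i ≠ j → ∀ v, P i (P j v) = 0 := by
    intro i j hij v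
    rw [hP]
    by_cases hi : i = i0 <;> by_cases hj : j = i0 <;>
      simp only [hi, hj, ite_true, ite_false, if_pos, if_neg]
    · exact absurd (hi.trans hj.symm) hij
    · simp only [ContinuousLinearMap.sub_apply, ContinuousLinearMap.id_apply]
      rw [hS_T j (Finset.mem_erase.mpr ⟨hj, Finset.mem_univ j⟩)]
      abel
    · simp only [ContinuousLinearMap.sub_apply, ContinuousLinearMap.id_apply, map_sub]
      rw [hS_apply, map_sum,
        Finset.sum_eq_single_of_mem i (Finset.mem_erase.mpr ⟨hi, Finset.mem_univ i⟩)
          (fun k _ hk => hT_orth i k (Ne.symm hk) v)]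
      rw [hT_idem]
      abel
    · exact hT_orth i j (by simp [hi, hj]; exact hij) v
  have hP_sum : ∀ v, ∑ i, P i v = v := by
    intro v
    rw [← Finset.add_sum_erase Finset.univ (fun i => P i v) (Finset.mem_univ i0)]
    have h1 : P i0 v = v - S v := by rw [hP]; simp
    have h2 : ∀ i ∈ Finset.univ.erase i0, P i v = T i v := by
      intro i hi
      rw [hP]
      simp [(Finset.mem_erase.mp hi).1]
    rw [h1, Finset.sum_congr rfl h2, ← hS_apply]
    abel
  have hval : ∑ i, P i (ξ i) = ∑ i, ξ i := by
    rw [← Finset.add_sum_erase Finset.univ (fun i => P i (ξ i)) (Finset.mem_univ i0),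
      ← Finset.add_sum_erase Finset.univ ξ (Finset.mem_univ i0)]
    have h1 : P i0 (ξ i0) = ξ i0 := by
      rw [hP]
      simp only [ite_true, if_pos, ContinuousLinearMap.sub_apply, ContinuousLinearMap.id_apply]
      rw [hS_apply, Finset.sum_eq_zero (fun i hi => hT_orth_apply i i0
        (Finset.mem_erase.mp hi).1 )]
      abel
    have h2 : ∀ i ∈ Finset.univ.erase i0, P i (ξ i) = ξ i := by
      intro i hi
      rw [hP]
      simp only [(Finset.mem_erase.mp hi).1, ite_false, if_neg, not_false_iff]
      exact hT_self_apply i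
    rw [h1, Finset.sum_congr rfl h2]
  refine le_antisymm (le_trans (hMN_le_sqrt ξ) hnorm.le) ?_
  refine le_csSup (hMN_bddAbove ξ) ?_
  exact ⟨P, hP_proj, hP_orth, hP_sum, by rw [hval]⟩

private lemma sum_pair {M : Type*} [AddCommMonoid M] {n : ℕ} {i j : Fin n} (hij : i ≠ j)
    (x y : M) :
    ∑ k, (if k = i then x else if k = j then y else 0) = x + y := by
  have hpt : ∀ k : Fin n, (if k = i then x else if k = j then y else 0) =
      (if k = i then x else 0) + (if k = j then y else 0) := by
    intro k
    by_cases h1 : k = i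
    · subst h1; simp [hij]
    · by_cases h2 : k = j
      · subst h2; simp [h1, Ne.symm hij]
      · simp [h1, h2]
  rw [Finset.sum_congr rfl fun k _ => hpt k, Finset.sum_add_distrib]
  simp

private lemma inner_eq_zero_of_const (x y : H)
    (h : ∀ c : ℂ, ‖c‖ = 1 → ‖x + c • y‖ = ‖x + y‖) : (inner ℂ x y : ℂ) = 0 := by
  apply key_c
  intro c hc
  have e1 := h c hc
  have e2 := h (-c) (by rw [norm_neg]; exact hc)
  have q : ∀ d : ℂ, ‖d‖ = 1 → ‖x + d • y‖ ^ 2 =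
      ‖x‖ ^ 2 + 2 * (d * (inner ℂ x y : ℂ)).re + ‖y‖ ^ 2 := by
    intro d hd
    have := norm_add_sq (𝕜 := ℂ) x (d • y)
    rw [inner_smul_right, norm_smul, hd, one_mul] at this
    exact this
  have q1 := q c hc
  have q2 := q (-c) (by rw [norm_neg]; exact hc)
  rw [e1] at q1
  rw [e2] at q2
  have : ((-c) * (inner ℂ x y : ℂ)).re = -((c * (inner ℂ x y : ℂ)).re) := by
    rw [neg_mul, Complex.neg_re]
  linarith


/-- For a direct sum decomposition `H = H₁ ⊕ ⋯ ⊕ Hₙ` of a Hilbert space into closed subspaces,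
the following are equivalent: (i) the subspaces are pairwise orthogonal; (ii) the decomposition
is small with respect to the Hilbert multi-norm; (iii) the decomposition is orthogonal with
respect to the Hilbert multi-norm; (iv) the decomposition is hermitian. -/
theorem hilbert_decomposition_tfae
    (n : ℕ) (Y : Fin n → Submodule ℂ H)
    (hclosed : ∀ i, IsClosed (Y i : Set H))
    (huniq : ∀ v : H, ∃! f : Fin n → H, (∀ i, f i ∈ Y i) ∧ ∑ i, f i = v)
    (Q : Fin n → H → H)
    (hQmem : ∀ v : H, ∀ i, Q i v ∈ Y i)
    (hQsum : ∀ v : H, ∑ i, Q i v = v) :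
    -- (i) ↔ (ii)
    ((∀ i j, i ≠ j → ∀ x ∈ Y i, ∀ y ∈ Y j, (inner ℂ x y : ℂ) = 0) ↔
      (∀ ξ : Fin n → H, ‖∑ i, Q i (ξ i)‖ ≤ hilbertMultiNorm n ξ)) ∧
    -- (i) ↔ (iii)
    ((∀ i j, i ≠ j → ∀ x ∈ Y i, ∀ y ∈ Y j, (inner ℂ x y : ℂ) = 0) ↔
      (∀ ξ : Fin n → H, (∀ i, ξ i ∈ Y i) →
        ∀ (m : ℕ) (S : Fin m → Finset (Fin n)), (∀ i, ∃! j, i ∈ S j) →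
          hilbertMultiNorm m (fun j => ∑ i ∈ S j, ξ i) = hilbertMultiNorm n ξ)) ∧
    -- (i) ↔ (iv)
    ((∀ i j, i ≠ j → ∀ x ∈ Y i, ∀ y ∈ Y j, (inner ℂ x y : ℂ) = 0) ↔
      (∀ (α : Fin n → ℂ), (∀ i, ‖α i‖ = 1) → ∀ ξ : Fin n → H, (∀ i, ξ i ∈ Y i) →
        ‖∑ i, α i • ξ i‖ = ‖∑ i, ξ i‖)) := by
  classical
  -- Determination of Q on elements of the subspaces
  have hQd : ∀ (i : Fin n) (x : H), x ∈ Y i → ∀ k, Q k x = if k = i then x else 0 := by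
    intro i x hx k
    obtain ⟨f, -, hfu⟩ := huniq x
    have h1 : (fun k => Q k x) = f := hfu _ ⟨hQmem x, hQsum x⟩
    have h2 : (fun k => if k = i then x else 0) = f := by
      refine hfu _ ⟨?_, ?_⟩
      · intro k
        by_cases hk : k = i
        · subst hk; simp [hx]
        · simp [hk]
      · simp
    calc Q k x = f k := congrFun h1 k
      _ = if k = i then x else 0 := (congrFun h2 k).symm
  -- (i) → (ii)
  have h12 : (∀ i j, i ≠ j → ∀ x ∈ Y i, ∀ y ∈ Y j, (inner ℂ x y : ℂ) = 0) →
      ∀ ξ : Fin n → H, ‖∑ i, Q i (ξ i)‖ ≤ hilbertMultiNorm n ξ := by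
    intro h1 ξ
    haveI : ∀ i, CompleteSpace (Y i) := fun i => (hclosed i).completeSpace_coe
    set P : Fin n → H →L[ℂ] H := fun i => (Y i).subtypeL.comp (Submodule.orthogonalProjectionOnto (Y i))
      with hPdef
    have hP_apply : ∀ i v, P i v = (Submodule.orthogonalProjectionOnto (Y i) v : H) := fun _ _ => rfl
    have hYO : ∀ i j, i ≠ j → ∀ y ∈ Y j, y ∈ (Y i)ᗮ := by
      intro i j hij y hy
      rw [Submodule.mem_orthogonal]
      exact fun u hu => h1 i j hij u hu y hy
    have hP_idem : ∀ i v, P i (P i v) = P i v := by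
      intro i v; rw [hP_apply, hP_apply, Submodule.orthogonalProjectionOnto_mem_subspace_eq_self]
    have hP_self : ∀ i (v w : H), (inner ℂ (P i v) w : ℂ) = inner ℂ v (P i w) := fun i v w =>
      Submodule.inner_starProjection_left_eq_right _ v w
    have hP_mem : ∀ i v, P i v ∈ Y i := fun i v => Submodule.coe_mem _
    have hP_zero : ∀ i (w : H), w ∈ (Y i)ᗮ → P i w = 0 := by
      intro i w hw
      rw [hP_apply, Submodule.orthogonalProjectionOnto_apply_of_mem_orthogonal hw]
      rfl
    have hP_eq_self : ∀ i w, w ∈ Y i → P i w = w := by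
      intro i w hw; exact Submodule.starProjection_eq_self_iff.mpr hw
    have hPQ : ∀ i v, P i v = Q i v := by
      intro i v
      conv_lhs => rw [← hQsum v]
      rw [map_sum, Finset.sum_eq_single i
        (fun j _ hji => hP_zero i _ (hYO i j (Ne.symm hji) _ (hQmem v j)))
        (fun hi => absurd (Finset.mem_univ i) hi)]
      exact hP_eq_self i _ (hQmem v i)
    have hP_orth : ∀ i j, i ≠ j → ∀ v, P i (P j v) = 0 := fun i j hij v =>
      hP_zero i _ (hYO i j hij _ (hP_mem j v))
    have hP_sum : ∀ v, ∑ i, P i v = v := by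
      intro v; rw [Finset.sum_congr rfl fun i _ => hPQ i v]; exact hQsum v
    have heq : ‖∑ i, Q i (ξ i)‖ = ‖∑ i, P i (ξ i)‖ := by
      rw [Finset.sum_congr rfl fun i _ => hPQ i (ξ i)]
    rw [heq]
    exact le_csSup (hMN_bddAbove ξ) ⟨P, fun i => ⟨hP_idem i, hP_self i⟩, hP_orth, hP_sum, rfl⟩
  -- (ii) → (i)
  have h21 : (∀ ξ : Fin n → H, ‖∑ i, Q i (ξ i)‖ ≤ hilbertMultiNorm n ξ) →
      ∀ i j, i ≠ j → ∀ x ∈ Y i, ∀ y ∈ Y j, (inner ℂ x y : ℂ) = 0 := by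
    intro h2 i j hij x hx y hy
    apply inner_eq_zero_of_le
    intro c hc
    set ξ : Fin n → H := fun k => if k = i then x else if k = j then c • y else 0 with hξ
    have hQξ : ∀ k, Q k (ξ k) = if k = i then x else if k = j then c • y else 0 := by
      intro k
      by_cases h1 : k = i
      · have e : ξ k = x := by simp [hξ, h1]
        rw [e, hQd i x hx k, h1]
        simp
      · by_cases h2' : k = j
        · have e : ξ k = c • y := by simp [hξ, h1, h2', Ne.symm hij]
          rw [e, hQd j (c • y) (Submodule.smul_mem _ c hy) k, h2']
          simp [Ne.symm hij]
        · have e : ξ k = 0 := by simp [hξ, h1, h2']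
          rw [e, hQd k 0 (zero_mem (Y k)) k]
          simp [h1, h2']
    have hsum : ∑ k, Q k (ξ k) = x + c • y := by
      rw [Finset.sum_congr rfl fun k _ => hQξ k]
      exact sum_pair hij x (c • y)
    have hb := h2 ξ
    rw [hsum] at hb
    have hbb : hilbertMultiNorm n ξ ≤ Real.sqrt (‖x‖ ^ 2 + ‖y‖ ^ 2) := by
      have hns : ∑ k, ‖ξ k‖ ^ 2 = ‖x‖ ^ 2 + ‖y‖ ^ 2 := by
        have hpt : ∀ k, ‖ξ k‖ ^ 2 =
            (if k = i then ‖x‖ ^ 2 else if k = j then ‖y‖ ^ 2 else 0) := by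
          intro k
          by_cases h1 : k = i
          · simp [hξ, h1]
          · by_cases h2' : k = j
            · simp [hξ, h1, h2', Ne.symm hij, norm_smul, hc]
            · simp [hξ, h1, h2']
        rw [Finset.sum_congr rfl fun k _ => hpt k]
        exact sum_pair hij _ _
      rw [← hns]
      exact hMN_le_sqrt ξ
    have hfin : ‖x + c • y‖ ≤ Real.sqrt (‖x‖ ^ 2 + ‖y‖ ^ 2) := le_trans hb hbb
    nlinarith [Real.sq_sqrt (by positivity : (0:ℝ) ≤ ‖x‖ ^ 2 + ‖y‖ ^ 2),
      Real.sqrt_nonneg (‖x‖ ^ 2 + ‖y‖ ^ 2), norm_nonneg (x + c • y)]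
  -- (i) → (iii)
  have h13 : (∀ i j, i ≠ j → ∀ x ∈ Y i, ∀ y ∈ Y j, (inner ℂ x y : ℂ) = 0) →
      ∀ ξ : Fin n → H, (∀ i, ξ i ∈ Y i) →
        ∀ (m : ℕ) (S : Fin m → Finset (Fin n)), (∀ i, ∃! j, i ∈ S j) →
          hilbertMultiNorm m (fun j => ∑ i ∈ S j, ξ i) = hilbertMultiNorm n ξ := by
    intro h1 ξ hξ m S hS
    have hxo : ∀ i j, i ≠ j → (inner ℂ (ξ i) (ξ j) : ℂ) = 0 := fun i j hij =>
      h1 i j hij _ (hξ i) _ (hξ j)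
    have hηo : ∀ j k, j ≠ k →
        (inner ℂ (∑ i ∈ S j, ξ i) (∑ i ∈ S k, ξ i) : ℂ) = 0 := by
      intro j k hjk
      rw [sum_inner]
      refine Finset.sum_eq_zero fun a ha => ?_
      rw [inner_sum]
      refine Finset.sum_eq_zero fun b hb => ?_
      refine hxo a b fun hab => ?_
      obtain ⟨c, -, hcu⟩ := hS a
      exact hjk ((hcu j ha).trans (hcu k (hab ▸ hb)).symm)
    have hsum : ∑ j, ∑ i ∈ S j, ξ i = ∑ i, ξ i := by
      have hrw : ∀ j, ∑ i ∈ S j, ξ i = ∑ i, if i ∈ S j then ξ i else 0 := by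
        intro j
        rw [Finset.sum_ite_mem, Finset.univ_inter]
      rw [Finset.sum_congr rfl fun j _ => hrw j, Finset.sum_comm]
      refine Finset.sum_congr rfl fun i _ => ?_
      obtain ⟨c, hcmem, hcu⟩ := hS i
      rw [Finset.sum_eq_single c (fun j _ hj => if_neg fun hmem => hj (hcu j hmem))
        (fun hc => absurd (Finset.mem_univ c) hc), if_pos hcmem]
    rw [hMN_eq_of_orth _ hηo, hMN_eq_of_orth ξ hxo, hsum]
  -- (iii) → (i)
  have h31 : (∀ ξ : Fin n → H, (∀ i, ξ i ∈ Y i) →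
        ∀ (m : ℕ) (S : Fin m → Finset (Fin n)), (∀ i, ∃! j, i ∈ S j) →
          hilbertMultiNorm m (fun j => ∑ i ∈ S j, ξ i) = hilbertMultiNorm n ξ) →
      ∀ i j, i ≠ j → ∀ x ∈ Y i, ∀ y ∈ Y j, (inner ℂ x y : ℂ) = 0 := by
    intro h3 i j hij x hx y hy
    apply inner_eq_zero_of_const
    have key : ∀ c : ℂ, ‖c‖ = 1 →
        ‖x + c • y‖ = hilbertMultiNorm n (fun k => if k = i then x else if k = j then y else 0) := by
      intro c hc
      set ξc : Fin n → H := fun k => if k = i then x else if k = j then c • y else 0 with hξc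
      have hmem : ∀ k, ξc k ∈ Y k := by
        intro k
        by_cases h1 : k = i
        · subst h1; simpa [hξc] using hx
        · by_cases h2' : k = j
          · subst h2'; simp only [hξc, if_neg h1, if_pos rfl]
            exact Submodule.smul_mem _ c hy
          · simp only [hξc, if_neg h1, if_neg h2']; exact zero_mem _
      have hpart : ∀ i : Fin n, ∃! j : Fin 1, i ∈ (fun _ : Fin 1 => Finset.univ) j :=
        fun i => ⟨0, Finset.mem_univ i, fun j _ => Subsingleton.elim j 0⟩
      have happ := h3 ξc hmem 1 (fun _ => Finset.univ) hpart
      have hone : hilbertMultiNorm 1 (fun _ : Fin 1 => ∑ k, ξc k) = ‖∑ k, ξc k‖ :=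
        hMN_one _
      have hsumξ : ∑ k, ξc k = x + c • y := sum_pair hij x (c • y)
      have hcongr : hilbertMultiNorm n ξc =
          hilbertMultiNorm n (fun k => if k = i then x else if k = j then y else 0) := by
        apply hMN_congr
        intro k
        by_cases h1 : k = i
        · exact ⟨1, norm_one, by simp [hξc, h1]⟩
        · by_cases h2' : k = j
          · exact ⟨c, hc, by simp [hξc, h1, h2', Ne.symm hij]⟩
          · exact ⟨1, norm_one, by simp [hξc, h1, h2']⟩
      calc ‖x + c • y‖ = ‖∑ k, ξc k‖ := by rw [hsumξ]
        _ = hilbertMultiNorm 1 (fun _ : Fin 1 => ∑ k, ξc k) := hone.symm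
        _ = hilbertMultiNorm n ξc := happ
        _ = _ := hcongr
    intro c hc
    rw [key c hc, ← key 1 norm_one, one_smul]
  -- (i) → (iv)
  have h14 : (∀ i j, i ≠ j → ∀ x ∈ Y i, ∀ y ∈ Y j, (inner ℂ x y : ℂ) = 0) →
      ∀ (α : Fin n → ℂ), (∀ i, ‖α i‖ = 1) → ∀ ξ : Fin n → H, (∀ i, ξ i ∈ Y i) →
        ‖∑ i, α i • ξ i‖ = ‖∑ i, ξ i‖ := by
    intro h1 α hα ξ hξ
    have hxo : ∀ i j, i ≠ j → (inner ℂ (ξ i) (ξ j) : ℂ) = 0 := fun i j hij =>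
      h1 i j hij _ (hξ i) _ (hξ j)
    have hao : ∀ i j, i ≠ j → (inner ℂ (α i • ξ i) (α j • ξ j) : ℂ) = 0 := by
      intro i j hij
      rw [inner_smul_left, inner_smul_right, hxo i j hij, mul_zero, mul_zero]
    have e1 := norm_sum_sq _ hao
    have e2 := norm_sum_sq _ hxo
    have e3 : ∀ i, ‖α i • ξ i‖ ^ 2 = ‖ξ i‖ ^ 2 := by
      intro i; rw [norm_smul, hα i, one_mul]
    rw [Finset.sum_congr rfl fun i _ => e3 i, ← e2] at e1
    rw [← Real.sqrt_sq (norm_nonneg (∑ i, α i • ξ i)),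
      ← Real.sqrt_sq (norm_nonneg (∑ i, ξ i)), e1]
  -- (iv) → (i)
  have h41 : (∀ (α : Fin n → ℂ), (∀ i, ‖α i‖ = 1) → ∀ ξ : Fin n → H, (∀ i, ξ i ∈ Y i) →
        ‖∑ i, α i • ξ i‖ = ‖∑ i, ξ i‖) →
      ∀ i j, i ≠ j → ∀ x ∈ Y i, ∀ y ∈ Y j, (inner ℂ x y : ℂ) = 0 := by
    intro h4 i j hij x hx y hy
    apply inner_eq_zero_of_const
    intro c hc
    set ξ : Fin n → H := fun k => if k = i then x else if k = j then y else 0 with hξ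
    have hmem : ∀ k, ξ k ∈ Y k := by
      intro k
      by_cases h1 : k = i
      · subst h1; simpa [hξ] using hx
      · by_cases h2' : k = j
        · subst h2'; simp only [hξ, if_neg h1, if_pos rfl]; exact hy
        · simp only [hξ, if_neg h1, if_neg h2']; exact zero_mem _
    set α : Fin n → ℂ := fun k => if k = j then c else 1 with hα
    have hαn : ∀ k, ‖α k‖ = 1 := by
      intro k
      by_cases h2' : k = j <;> simp [hα, h2', hc]
    have happ := h4 α hαn ξ hmem
    have hpt : ∀ k, α k • ξ k = if k = i then x else if k = j then c • y else 0 := by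
      intro k
      by_cases h1 : k = i
      · subst h1; simp [hα, hξ, hij, Ne.symm hij]
      · by_cases h2' : k = j
        · subst h2'; simp [hα, hξ, h1]
        · simp [hα, hξ, h1, h2']
    rw [Finset.sum_congr rfl fun k _ => hpt k] at happ
    rw [sum_pair hij x (c • y)] at happ
    rw [show ∑ k, ξ k = x + y from sum_pair hij x y] at happ
    exact happ
  exact ⟨⟨h12, h21⟩, ⟨h13, h31⟩, ⟨h14, h41⟩⟩
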